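/- A straight segment inside the ellipse E = {(y,z) : (y/α₂)² + (z/α₃)² ≤ 1} with α₂ ≠ α₃, whose endpoints lie on ∂E and which meets ∂E orthogonally at both endpoints, coincides with the major or the minor axis of E (i.e., it is the segment from (α₂,0) to (−α₂,0) or from (0,α₃) to (0,−α₃)). -/

import Mathlib

open scoped RealInnerProductSpace

/-- The point `(a, b)` of the Euclidean plane. -/
noncomputable def vec2 (a b : ℝ) : EuclideanSpace ℝ (Fin 2) :=
  (WithLp.equiv 2 (Fin 2 → ℝ)).symm ![a, b]

/-- A tangent vector to the boundary of the ellipse with semi-axes `α₂, α₃`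
at the point `p` (orthogonal to the gradient `(2p₁/α₂², 2p₂/α₃²)`). -/
noncomputable def tangentVec (α₂ α₃ : ℝ) (p : EuclideanSpace ℝ (Fin 2)) :
    EuclideanSpace ℝ (Fin 2) :=
  vec2 (-(p 1 / α₃ ^ 2)) (p 0 / α₂ ^ 2)

set_option maxHeartbeats 1000000 in
theorem stmt_9 (α₂ α₃ : ℝ) (h₂ : 0 < α₂) (h₃ : 0 < α₃) (hne : α₂ ≠ α₃)
    (p q : EuclideanSpace ℝ (Fin 2)) (hpq : p ≠ q)
    (hp : (p 0 / α₂) ^ 2 + (p 1 / α₃) ^ 2 = 1)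
    (hq : (q 0 / α₂) ^ 2 + (q 1 / α₃) ^ 2 = 1)
    (hseg : segment ℝ p q ⊆ {x : EuclideanSpace ℝ (Fin 2) |
        (x 0 / α₂) ^ 2 + (x 1 / α₃) ^ 2 ≤ 1})
    (horth₁ : ⟪q - p, tangentVec α₂ α₃ p⟫ = 0)
    (horth₂ : ⟪q - p, tangentVec α₂ α₃ q⟫ = 0) :
    segment ℝ p q = segment ℝ (vec2 α₂ 0) (vec2 (-α₂) 0)
      ∨ segment ℝ p q = segment ℝ (vec2 0 α₃) (vec2 0 (-α₃)) := by
  have h2ne : α₂ ≠ 0 := ne_of_gt h₂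
  have h3ne : α₃ ≠ 0 := ne_of_gt h₃
  have h1 : (q 0 - p 0) * (-(p 1 / α₃ ^ 2)) + (q 1 - p 1) * (p 0 / α₂ ^ 2) = 0 := by
    have h := horth₁
    simp [tangentVec, vec2, PiLp.inner_apply, Fin.sum_univ_two, RCLike.inner_apply] at h
    linear_combination h
  have h2 : (q 0 - p 0) * (-(q 1 / α₃ ^ 2)) + (q 1 - p 1) * (q 0 / α₂ ^ 2) = 0 := by
    have h := horth₂
    simp [tangentVec, vec2, PiLp.inner_apply, Fin.sum_univ_two, RCLike.inner_apply] at h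
    linear_combination h
  have hne2 : α₂ ^ 2 ≠ α₃ ^ 2 := fun h => hne (by nlinarith)
  have hkey : (q 0 - p 0) * (q 1 - p 1) = 0 := by
    have hd : (q 0 - p 0) * (q 1 - p 1) * (α₂ ^ 2 - α₃ ^ 2) = 0 := by
      have e1 := h1
      have e2 := h2
      field_simp at e1 e2 ⊢
      nlinarith [e1, e2]
    rcases mul_eq_zero.mp hd with h | h
    · exact h
    · exact absurd (by linarith [sub_eq_zero.mp h]) hne2
  have hne01 : p 0 ≠ q 0 ∨ p 1 ≠ q 1 := by
    by_contra hc
    push_neg at hc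
    exact hpq (by ext i; fin_cases i <;> [exact hc.1; exact hc.2])
  rcases mul_eq_zero.mp hkey with hu | hv
  · -- q 0 = p 0 : vertical, minor/second axis
    have h00 : q 0 = p 0 := by linarith [sub_eq_zero.mp hu]
    have h1ne : p 1 ≠ q 1 := by
      rcases hne01 with h | h
      · exact absurd h00.symm h
      · exact h
    have hp0 : p 0 = 0 := by
      have := h1
      rw [h00] at this
      have hq1 : (q 1 - p 1) * (p 0 / α₂ ^ 2) = 0 := by linarith
      rcases mul_eq_zero.mp hq1 with h | h
      · exact absurd (by linarith [sub_eq_zero.mp h]) (Ne.symm h1ne)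
      · field_simp at h; simpa using h
    have hq0 : q 0 = 0 := h00.trans hp0
    have hp1 : p 1 = α₃ ∨ p 1 = -α₃ := by
      have h' := hp; rw [hp0] at h'; simp at h'
      rcases h' with h | h
      · left; field_simp at h; linarith
      · right; field_simp at h; linarith
    have hq1 : q 1 = α₃ ∨ q 1 = -α₃ := by
      have h' := hq; rw [hq0] at h'; simp at h'
      rcases h' with h | h
      · left; field_simp at h; linarith
      · right; field_simp at h; linarith
    right
    rcases hp1 with hp1 | hp1 <;> rcases hq1 with hq1 | hq1
    · exact absurd (hp1.trans hq1.symm) h1ne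
    · have hpe : p = vec2 0 α₃ := by ext i; fin_cases i <;> simp [vec2, hp0, hp1]
      have hqe : q = vec2 0 (-α₃) := by ext i; fin_cases i <;> simp [vec2, hq0, hq1]
      rw [hpe, hqe]
    · have hpe : p = vec2 0 (-α₃) := by ext i; fin_cases i <;> simp [vec2, hp0, hp1]
      have hqe : q = vec2 0 α₃ := by ext i; fin_cases i <;> simp [vec2, hq0, hq1]
      rw [hpe, hqe, segment_symm]
    · exact absurd (hp1.trans hq1.symm) h1ne
  · -- q 1 = p 1 : horizontal, first axis
    have h11 : q 1 = p 1 := by linarith [sub_eq_zero.mp hv]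
    have h0ne : p 0 ≠ q 0 := by
      rcases hne01 with h | h
      · exact h
      · exact absurd h11.symm h
    have hp1 : p 1 = 0 := by
      have := h1
      rw [h11] at this
      have hq1 : (q 0 - p 0) * (-(p 1 / α₃ ^ 2)) = 0 := by linarith
      rcases mul_eq_zero.mp hq1 with h | h
      · exact absurd (by linarith [sub_eq_zero.mp h]) (Ne.symm h0ne)
      · field_simp at h; simpa using h
    have hq1' : q 1 = 0 := h11.trans hp1
    have hp0 : p 0 = α₂ ∨ p 0 = -α₂ := by
      have h' := hp; rw [hp1] at h'; simp at h'
      rcases h' with h | h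
      · left; field_simp at h; linarith
      · right; field_simp at h; linarith
    have hq0 : q 0 = α₂ ∨ q 0 = -α₂ := by
      have h' := hq; rw [hq1'] at h'; simp at h'
      rcases h' with h | h
      · left; field_simp at h; linarith
      · right; field_simp at h; linarith
    left
    rcases hp0 with hp0 | hp0 <;> rcases hq0 with hq0 | hq0
    · exact absurd (hp0.trans hq0.symm) h0ne
    · have hpe : p = vec2 α₂ 0 := by ext i; fin_cases i <;> simp [vec2, hp0, hp1]
      have hqe : q = vec2 (-α₂) 0 := by ext i; fin_cases i <;> simp [vec2, hq0, hq1']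
      rw [hpe, hqe]
    · have hpe : p = vec2 (-α₂) 0 := by ext i; fin_cases i <;> simp [vec2, hp0, hp1]
      have hqe : q = vec2 α₂ 0 := by ext i; fin_cases i <;> simp [vec2, hq0, hq1']
      rw [hpe, hqe, segment_symm]
    · exact absurd (hp0.trans hq0.symm) h0ne
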